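/- Let m and n be positive integers with m > ∏_{p ≤ n, p prime} p^{⌊log_p n⌋}. Then the binomial coefficient C(m+n, n) admits a Grimm factorization, i.e., there exist positive integers a_1, ..., a_n with C(m+n, n) = a_1 ⋯ a_n, a_i dividing m+i and a_i > 1 for each 1 ≤ i ≤ n, and gcd(a_i, a_j) = 1 for all 1 ≤ i ≠ j ≤ n. -/

import Mathlib

open Finset

private lemma factorization_factorial' {p n b : ℕ} (hp : p.Prime) (hb : Nat.log p n < b) :
    (Nat.factorial n).factorization p = ∑ i ∈ Finset.Ico 1 b, n / p ^ i := by
  have h := Nat.Prime.emultiplicity_factorial hp hb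
  have h2 : multiplicity p (Nat.factorial n) = ∑ i ∈ Finset.Ico 1 b, n / p ^ i :=
    multiplicity_eq_of_emultiplicity_eq_some h
  rw [← Nat.multiplicity_eq_factorization hp (Nat.factorial_ne_zero n), h2]

/-- **Theorem 1 of the paper.** If `m > ∏_{p ≤ n, p prime} p^⌊log_p n⌋`, then the
binomial coefficient `C(m+n, n)` admits a Grimm factorization. -/
theorem grimm_factorization_of_large
    (m n : ℕ) (hm : 0 < m) (hn : 0 < n)
    (h : m > ∏ p ∈ Finset.filter Nat.Prime (Finset.range (n + 1)),
      p ^ ⌊Real.logb (p : ℝ) (n : ℝ)⌋₊) :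
    ∃ a : ℕ → ℕ,
      Nat.choose (m + n) n = ∏ i ∈ Finset.Icc 1 n, a i ∧
      (∀ i ∈ Finset.Icc 1 n, a i ∣ (m + i) ∧ 1 < a i) ∧
      (∀ i ∈ Finset.Icc 1 n, ∀ j ∈ Finset.Icc 1 n, i ≠ j →
        Nat.Coprime (a i) (a j)) := by
  classical
  -- Convert the real logarithm floor to `Nat.log`.
  have hlogb : ∀ p : ℕ, p.Prime → ⌊Real.logb (p : ℝ) (n : ℝ)⌋₊ = Nat.log p n := by
    intro p hp
    have h1 : (0:ℝ) ≤ Real.logb (p : ℝ) (n : ℝ) :=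
      Real.logb_nonneg (by exact_mod_cast hp.one_lt) (by exact_mod_cast hn)
    have h2 : ((⌊Real.logb (p : ℝ) (n : ℝ)⌋₊ : ℕ) : ℤ) = ⌊Real.logb (p : ℝ) (n : ℝ)⌋ :=
      Int.natCast_floor_eq_floor h1
    have h3 : ⌊Real.logb (p : ℝ) (n : ℝ)⌋ = Int.log p ((n : ℕ) : ℝ) :=
      Real.floor_logb_natCast (by positivity)
    rw [Int.log_natCast] at h3
    exact_mod_cast h2.trans h3
  have hm' : ∏ p ∈ Finset.filter Nat.Prime (Finset.range (n + 1)), p ^ Nat.log p n < m := by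
    calc ∏ p ∈ Finset.filter Nat.Prime (Finset.range (n + 1)), p ^ Nat.log p n
        = ∏ p ∈ Finset.filter Nat.Prime (Finset.range (n + 1)),
            p ^ ⌊Real.logb (p : ℝ) (n : ℝ)⌋₊ := by
          refine Finset.prod_congr rfl fun p hp => ?_
          rw [hlogb p (Finset.mem_filter.mp hp).2]
      _ < m := h
  have hprod_pos : 0 < ∏ p ∈ Finset.filter Nat.Prime (Finset.range (n + 1)), p ^ Nat.log p n := by
    apply Finset.prod_pos
    intro p hp
    exact pow_pos (Finset.mem_filter.mp hp).2.pos _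
  set N := Nat.choose (m + n) n with hNdef
  have hN0 : 0 < N := Nat.choose_pos (Nat.le_add_left n m)
  set B := m + n + 1 with hB
  -- Legendre-type formula for the p-adic valuation of the binomial coefficient.
  have hvN : ∀ p : ℕ, p.Prime →
      N.factorization p
        = ∑ k ∈ Finset.Ico 1 B, (if p ^ k ≤ m % p ^ k + n % p ^ k then 1 else 0) := by
    intro p hp
    have hchoose : N * Nat.factorial n * Nat.factorial m = Nat.factorial (m + n) := by
      have := Nat.choose_mul_factorial_mul_factorial (Nat.le_add_left n m)
      simpa [hNdef] using this
    have hfac : N.factorization p + (Nat.factorial n).factorization p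
        + (Nat.factorial m).factorization p = (Nat.factorial (m + n)).factorization p := by
      rw [← hchoose, Nat.factorization_mul (mul_ne_zero hN0.ne' (Nat.factorial_ne_zero n))
        (Nat.factorial_ne_zero m), Nat.factorization_mul hN0.ne' (Nat.factorial_ne_zero n)]
      simp
    have hm2 := factorization_factorial' (n := m) (b := B) hp
      (by have := Nat.log_le_self p m; omega)
    have hn2 := factorization_factorial' (n := n) (b := B) hp
      (by have := Nat.log_le_self p n; omega)
    have hmn2 := factorization_factorial' (n := m + n) (b := B) hp
      (by have := Nat.log_le_self p (m + n); omega)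
    have hsum : ∑ k ∈ Finset.Ico 1 B, (m + n) / p ^ k
        = ∑ k ∈ Finset.Ico 1 B, (m / p ^ k + n / p ^ k
          + if p ^ k ≤ m % p ^ k + n % p ^ k then 1 else 0) :=
      Finset.sum_congr rfl fun k _ => Nat.add_div (pow_pos hp.pos k)
    rw [Finset.sum_add_distrib, Finset.sum_add_distrib] at hsum
    omega
  -- If there is a carry at level k, some m+i, 1 ≤ i ≤ n, is divisible by p^k.
  have hcarry1 : ∀ p k : ℕ, 0 < p → p ^ k ≤ m % p ^ k + n % p ^ k →
      ∃ i, 1 ≤ i ∧ i ≤ n ∧ p ^ k ∣ m + i := by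
    intro p k hp hle
    set q := p ^ k with hq
    have hq0 : 0 < q := pow_pos hp k
    have hmlt : m % q < q := Nat.mod_lt m hq0
    have hnle : n % q ≤ n := Nat.mod_le n q
    refine ⟨q - m % q, by omega, by omega, ⟨m / q + 1, ?_⟩⟩
    have h2 := Nat.div_add_mod m q
    have h3 : q * (m / q + 1) = q * (m / q) + q := by ring
    have h4 : m / q * q = q * (m / q) := by ring
    omega
  -- Conversely, a multiple of p^k > n in (m, m+n] forces a carry at level k.
  have hcarry2 : ∀ p k i : ℕ, 0 < p → 1 ≤ i → i ≤ n → p ^ k ∣ m + i → n < p ^ k →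
      p ^ k ≤ m % p ^ k + n % p ^ k := by
    intro p k i hp h1 h2 hdvd hlt
    set q := p ^ k with hq
    have hq0 : 0 < q := pow_pos hp k
    have hmlt : m % q < q := Nat.mod_lt m hq0
    have hmod : (m + i) % q = 0 := by
      obtain ⟨t, ht⟩ := hdvd
      rw [ht]
      exact Nat.mul_mod_right q t
    have hmod2 : (m % q + i) % q = 0 := by
      rw [Nat.add_mod] at hmod
      rwa [Nat.mod_eq_of_lt (by omega : i < q)] at hmod
    obtain ⟨t, ht⟩ := Nat.dvd_of_mod_eq_zero hmod2
    have hnq : n % q = n := Nat.mod_eq_of_lt hlt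
    rcases Nat.lt_or_ge t 2 with h' | h'
    · interval_cases t <;> simp at ht <;> omega
    · have := Nat.mul_le_mul_left q h'
      omega
  -- Lemma A : the valuation of N is at most the maximal valuation of the m+j.
  have hA : ∀ p : ℕ, p.Prime → ∀ e : ℕ,
      (∀ j ∈ Finset.Icc 1 n, (m + j).factorization p ≤ e) → N.factorization p ≤ e := by
    intro p hp e he
    rw [hvN p hp]
    calc ∑ k ∈ Finset.Ico 1 B, (if p ^ k ≤ m % p ^ k + n % p ^ k then 1 else 0)
        = ∑ k ∈ (Finset.Ico 1 B).filter (· ≤ e),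
            (if p ^ k ≤ m % p ^ k + n % p ^ k then 1 else 0) := by
          refine (Finset.sum_filter_of_ne ?_).symm
          intro k hk hne
          by_contra hke
          have hcond : p ^ k ≤ m % p ^ k + n % p ^ k := by
            by_contra hc; simp [hc] at hne
          obtain ⟨i, hi1, hi2, hdvd⟩ := hcarry1 p k hp.pos hcond
          have hk2 : k ≤ (m + i).factorization p :=
            (Nat.Prime.pow_dvd_iff_le_factorization hp (by omega)).mp hdvd
          have := he i (Finset.mem_Icc.mpr ⟨hi1, hi2⟩)
          omega
      _ ≤ ∑ _k ∈ (Finset.Ico 1 B).filter (· ≤ e), 1 :=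
          Finset.sum_le_sum (fun k _ => by split <;> omega)
      _ = ((Finset.Ico 1 B).filter (· ≤ e)).card := by simp
      _ ≤ (Finset.Icc 1 e).card := by
          refine Finset.card_le_card (fun k hk => ?_)
          simp only [Finset.mem_filter, Finset.mem_Ico] at hk
          simp only [Finset.mem_Icc]
          omega
      _ = e := by simp
  -- Lemma B : a prime power > n dividing m+i gives positive valuation and uniqueness.
  have hBkey : ∀ p : ℕ, p.Prime → ∀ i ∈ Finset.Icc 1 n,
      Nat.log p n < (m + i).factorization p →
      1 ≤ N.factorization p ∧
        (∀ j ∈ Finset.Icc 1 n, Nat.log p n < (m + j).factorization p → j = i) := by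
    intro p hp i hi hbig
    set L := Nat.log p n with hL
    have hq : n < p ^ (L + 1) := Nat.lt_pow_succ_log_self hp.one_lt n
    simp only [Finset.mem_Icc] at hi
    have hdvd : p ^ (L + 1) ∣ m + i :=
      (Nat.Prime.pow_dvd_iff_le_factorization hp (by omega)).mpr (by omega)
    constructor
    · rw [hvN p hp]
      have hlt1 : L + 1 < p ^ (L + 1) := Nat.lt_pow_self hp.one_lt
      have hlt2 : p ^ (L + 1) ≤ m + i := Nat.le_of_dvd (by omega) hdvd
      have hmem : (L + 1) ∈ Finset.Ico 1 B := by
        simp only [Finset.mem_Ico]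
        omega
      have hcond := hcarry2 p (L + 1) i hp.pos hi.1 hi.2 hdvd hq
      calc (1 : ℕ) = (if p ^ (L + 1) ≤ m % p ^ (L + 1) + n % p ^ (L + 1) then 1 else 0) := by
            simp [hcond]
        _ ≤ ∑ k ∈ Finset.Ico 1 B, (if p ^ k ≤ m % p ^ k + n % p ^ k then 1 else 0) :=
            Finset.single_le_sum
              (f := fun k => if p ^ k ≤ m % p ^ k + n % p ^ k then (1:ℕ) else 0)
              (fun k _ => by positivity) hmem
    · intro j hj hbigj
      simp only [Finset.mem_Icc] at hj
      have hdvdj : p ^ (L + 1) ∣ m + j :=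
        (Nat.Prime.pow_dvd_iff_le_factorization hp (by omega)).mpr (by omega)
      obtain ⟨s, hs⟩ := hdvd
      obtain ⟨t, ht⟩ := hdvdj
      rcases lt_trichotomy s t with hlt | heq | hgt
      · have h1 : p ^ (L + 1) * (s + 1) ≤ p ^ (L + 1) * t := Nat.mul_le_mul_left _ (by omega)
        have h2 : p ^ (L + 1) * (s + 1) = p ^ (L + 1) * s + p ^ (L + 1) := by ring
        omega
      · subst heq
        omega
      · have h1 : p ^ (L + 1) * (t + 1) ≤ p ^ (L + 1) * s := Nat.mul_le_mul_left _ (by omega)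
        have h2 : p ^ (L + 1) * (t + 1) = p ^ (L + 1) * t + p ^ (L + 1) := by ring
        omega
  -- Pigeonhole: each m+i has some prime with valuation exceeding log p n.
  have hpigeon : ∀ i ∈ Finset.Icc 1 n, ∃ p : ℕ, p.Prime ∧ Nat.log p n < (m + i).factorization p := by
    intro i hi
    simp only [Finset.mem_Icc] at hi
    by_contra hcon
    push_neg at hcon
    have hdvd : m + i ∣ ∏ p ∈ Finset.filter Nat.Prime (Finset.range (n + 1)), p ^ Nat.log p n := by
      have hx : m + i ≠ 0 := by omega
      have hrw : m + i = ∏ p ∈ (m + i).primeFactors, p ^ (m + i).factorization p := by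
        conv_lhs => rw [← Nat.factorization_prod_pow_eq_self hx]
        rw [Nat.prod_factorization_eq_prod_primeFactors]
      calc m + i = ∏ p ∈ (m + i).primeFactors, p ^ (m + i).factorization p := hrw
        _ ∣ ∏ p ∈ (m + i).primeFactors, p ^ Nat.log p n := by
            refine Finset.prod_dvd_prod_of_dvd _ _ (fun p hp => ?_)
            exact pow_dvd_pow p (hcon p (Nat.prime_of_mem_primeFactors hp))
        _ ∣ ∏ p ∈ Finset.filter Nat.Prime (Finset.range (n + 1)), p ^ Nat.log p n := by
            refine Finset.prod_dvd_prod_of_subset _ _ _ (fun p hp => ?_)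
            have hpp := Nat.prime_of_mem_primeFactors hp
            have hpd := Nat.dvd_of_mem_primeFactors hp
            have h1 : 0 < (m + i).factorization p :=
              Nat.Prime.factorization_pos_of_dvd hpp hx hpd
            have h2 : 0 < Nat.log p n := lt_of_lt_of_le h1 (hcon p hpp)
            have h3 : p ≤ n := (Nat.log_pos_iff.mp h2).1
            simp only [Finset.mem_filter, Finset.mem_range]
            exact ⟨by omega, hpp⟩
    have := Nat.le_of_dvd hprod_pos hdvd
    omega
  -- Choose for each prime an index maximizing the valuation.
  have hargmax : ∀ p : ℕ, ∃ ip, ip ∈ Finset.Icc 1 n ∧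
      ∀ j ∈ Finset.Icc 1 n, (m + j).factorization p ≤ (m + ip).factorization p := by
    intro p
    obtain ⟨ip, h1, h2⟩ := Finset.exists_max_image (Finset.Icc 1 n)
      (fun j => (m + j).factorization p) ⟨1, Finset.mem_Icc.mpr ⟨le_refl 1, hn⟩⟩
    exact ⟨ip, h1, h2⟩
  choose I hI1 hI2 using hargmax
  refine ⟨fun i => ∏ p ∈ N.primeFactors.filter (fun p => I p = i), p ^ N.factorization p,
    ?_, ?_, ?_⟩
  · rw [Finset.prod_fiberwise_of_maps_to (fun p _ => hI1 p) (fun p => p ^ N.factorization p)]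
    rw [← Nat.support_factorization]
    exact (Nat.factorization_prod_pow_eq_self hN0.ne').symm
  · intro i hi
    simp only [Finset.mem_Icc] at hi
    have hval : ∀ p ∈ N.primeFactors.filter (fun p => I p = i),
        0 < N.factorization p ∧ N.factorization p ≤ (m + i).factorization p := by
      intro p hp
      simp only [Finset.mem_filter] at hp
      obtain ⟨hpP, hpI⟩ := hp
      have hpp : p.Prime := Nat.prime_of_mem_primeFactors hpP
      have h1 : 0 < N.factorization p :=
        Nat.Prime.factorization_pos_of_dvd hpp hN0.ne' (Nat.dvd_of_mem_primeFactors hpP)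
      have h2 : N.factorization p ≤ (m + i).factorization p := by
        have := hA p hpp ((m + I p).factorization p) (hI2 p)
        rwa [hpI] at this
      exact ⟨h1, h2⟩
    have hsub : N.primeFactors.filter (fun p => I p = i) ⊆ (m + i).primeFactors := by
      intro p hp
      have hpp : p.Prime := Nat.prime_of_mem_primeFactors (Finset.mem_filter.mp hp).1
      obtain ⟨h1, h2⟩ := hval p hp
      refine Nat.mem_primeFactors.mpr ⟨hpp, Nat.dvd_of_factorization_pos (by omega), by omega⟩
    constructor
    · calc (∏ p ∈ N.primeFactors.filter (fun p => I p = i), p ^ N.factorization p)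
          ∣ ∏ p ∈ N.primeFactors.filter (fun p => I p = i), p ^ (m + i).factorization p :=
            Finset.prod_dvd_prod_of_dvd _ _ (fun p hp => pow_dvd_pow p (hval p hp).2)
        _ ∣ ∏ p ∈ (m + i).primeFactors, p ^ (m + i).factorization p :=
            Finset.prod_dvd_prod_of_subset _ _ _ hsub
        _ = m + i := by
            rw [← Nat.prod_factorization_eq_prod_primeFactors]
            exact Nat.factorization_prod_pow_eq_self (by omega)
    · -- a i > 1
      obtain ⟨p, hpp, hbig⟩ := hpigeon i (Finset.mem_Icc.mpr hi)
      obtain ⟨hpos, huniq⟩ := hBkey p hpp i (Finset.mem_Icc.mpr hi) hbig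
      have hpP : p ∈ N.primeFactors :=
        Nat.mem_primeFactors.mpr ⟨hpp, Nat.dvd_of_factorization_pos (by omega), hN0.ne'⟩
      have hIpi : I p = i := by
        refine huniq (I p) (hI1 p) ?_
        exact lt_of_lt_of_le hbig (hI2 p i (Finset.mem_Icc.mpr hi))
      have hmem : p ∈ N.primeFactors.filter (fun p => I p = i) :=
        Finset.mem_filter.mpr ⟨hpP, hIpi⟩
      have hdvd : p ^ N.factorization p ∣
          ∏ q ∈ N.primeFactors.filter (fun p => I p = i), q ^ N.factorization q :=
        Finset.dvd_prod_of_mem _ hmem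
      have hapos : 0 < ∏ q ∈ N.primeFactors.filter (fun p => I p = i), q ^ N.factorization q :=
        Finset.prod_pos (fun q hq =>
          pow_pos (Nat.prime_of_mem_primeFactors (Finset.mem_filter.mp hq).1).pos _)
      have h1 : p ≤ p ^ N.factorization p := Nat.le_self_pow (by omega) p
      have h2 : p ^ N.factorization p ≤
          ∏ q ∈ N.primeFactors.filter (fun p => I p = i), q ^ N.factorization q :=
        Nat.le_of_dvd hapos hdvd
      exact lt_of_lt_of_le hpp.one_lt (h1.trans h2)
  · intro i hi j hj hij
    refine Nat.coprime_prod_left_iff.mpr ?_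
    intro p hp
    refine Nat.coprime_prod_right_iff.mpr ?_
    intro q hq
    simp only [Finset.mem_filter] at hp hq
    have hpp : p.Prime := Nat.prime_of_mem_primeFactors hp.1
    have hqq : q.Prime := Nat.prime_of_mem_primeFactors hq.1
    have hpq : p ≠ q := by
      rintro rfl
      exact hij (hp.2 ▸ hq.2 ▸ rfl)
    exact Nat.Coprime.pow _ _ ((Nat.coprime_primes hpp hqq).mpr hpq)
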